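/- Let σ ∈ S_NC(kp,kq) and γ = γ_{kp,kq}. Then σ is k-alternating and k-equal (every cycle of σ has exactly k elements and σ(i) ≡ i+1 mod k) if and only if σ⁻¹γ is k-completing, i.e. σ⁻¹γ(i) ≡ i mod k for all i and (σ⁻¹γ)⁻¹γ separates the points of K = {k, 2k, …, (p+q)k}. -/

import Mathlib

open Equiv Finset
open scoped Classical

noncomputable section

def numCycles {n : ℕ} (π : Equiv.Perm (Fin n)) : ℕ :=
  π.cycleType.card + (univ.filter fun x => π x = x).card

def plen {n : ℕ} (π : Equiv.Perm (Fin n)) : ℕ := n - numCycles π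

def gammaPQ (p q : ℕ) : Equiv.Perm (Fin (p + q)) :=
  finSumFinEquiv.permCongr (Equiv.sumCongr (finRotate p) (finRotate q))

def cycleLen {n : ℕ} (π : Equiv.Perm (Fin n)) (k : Fin n) : ℕ :=
  (univ.filter fun m => π.SameCycle k m).card

def Separates {n : ℕ} (σ : Equiv.Perm (Fin n)) (A : Finset (Fin n)) : Prop :=
  ∀ a ∈ A, ∀ b ∈ A, σ.SameCycle a b → a = b

def oddSet (n : ℕ) : Finset (Fin n) := univ.filter fun i => Odd (i.val + 1)

def IsSNC (p q : ℕ) (π : Equiv.Perm (Fin (p + q))) : Prop :=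
  (∃ i j, π.SameCycle i j ∧ ¬ (gammaPQ p q).SameCycle i j) ∧
    numCycles π + numCycles (gammaPQ p q * π⁻¹) = p + q

def SameParity {n : ℕ} (a b : Fin n) : Prop := (Odd (a.val + 1) ↔ Odd (b.val + 1))

def EvenCycles {n : ℕ} (π : Equiv.Perm (Fin n)) : Prop := ∀ k, Even (cycleLen π k)

def ParityReversing {n : ℕ} (π : Equiv.Perm (Fin n)) : Prop := ∀ k, ¬ SameParity k (π k)

def SNCminus (p q : ℕ) (π : Equiv.Perm (Fin (p + q))) : Prop :=
  IsSNC p q π ∧ EvenCycles π ∧ ParityReversing π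

end

def KAlternating {n : ℕ} (k : ℕ) (σ : Equiv.Perm (Fin n)) : Prop :=
  ∀ i : Fin n, ((σ i).val) % k = (i.val + 1) % k

def KPreserving {n : ℕ} (k : ℕ) (τ : Equiv.Perm (Fin n)) : Prop :=
  ∀ i : Fin n, ((τ i).val) % k = i.val % k

/-- every cycle of σ has exactly k elements. -/
def KEqual {n : ℕ} (k : ℕ) (σ : Equiv.Perm (Fin n)) : Prop :=
  ∀ i : Fin n, cycleLen σ i = k

/-- the set K = {k, 2k, …} of points whose label is a multiple of k. -/
def multSet (n k : ℕ) : Finset (Fin n) := univ.filter fun i => (i.val + 1) % k = 0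


section AuxLemmas

open Equiv Finset
open scoped Classical

variable {n k : ℕ}

theorem Equiv.Perm.apply_inv_self {α : Type*} (f : Equiv.Perm α) (x : α) : f (f⁻¹ x) = x :=
  f.apply_symm_apply x

theorem Equiv.Perm.inv_apply_self {α : Type*} (f : Equiv.Perm α) (x : α) : f⁻¹ (f x) = x :=
  f.symm_apply_apply x

private lemma alt_pow {σ : Equiv.Perm (Fin n)} (h : ∀ i : Fin n, ((σ i).val) % k = (i.val + 1) % k)
    (m : ℕ) (i : Fin n) : ((σ ^ m) i).val % k = (i.val + m) % k := by
  induction m with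
  | zero => simp
  | succ m ih =>
    rw [pow_succ', Equiv.Perm.mul_apply, h, ← Nat.mod_add_mod, ih, Nat.mod_add_mod,
      Nat.add_assoc]

private lemma cycleLen_pos (σ : Equiv.Perm (Fin n)) (i : Fin n) : 0 < cycleLen σ i :=
  Finset.card_pos.mpr ⟨i, by simp [cycleLen, Equiv.Perm.SameCycle.refl]⟩

private lemma cycleLen_sameCycle {σ : Equiv.Perm (Fin n)} {i j : Fin n}
    (h : σ.SameCycle i j) : cycleLen σ i = cycleLen σ j := by
  unfold cycleLen
  congr 1
  ext m
  simp only [mem_filter, mem_univ, true_and]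
  exact ⟨fun hm => h.symm.trans hm, fun hm => h.trans hm⟩

private lemma pow_cycleLen (σ : Equiv.Perm (Fin n)) (i : Fin n) :
    (σ ^ cycleLen σ i) i = i := by
  by_cases h : σ i = i
  · have : ∀ m : ℕ, (σ ^ m) i = i := by
      intro m
      induction m with
      | zero => rfl
      | succ m ih => rw [pow_succ, Equiv.Perm.mul_apply, h] at *; rw [ih, h]
    exact this _
  · have hmem : i ∈ σ.support := Equiv.Perm.mem_support.mpr h
    have hcard : cycleLen σ i = (σ.cycleOf i).support.card := by
      unfold cycleLen
      congr 1
      ext m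
      simp only [mem_filter, mem_univ, true_and, Equiv.Perm.mem_support_cycleOf_iff]
      tauto
    rw [hcard]
    have := Equiv.Perm.pow_mod_card_support_cycleOf_self_apply σ
      ((σ.cycleOf i).support.card) i
    rw [Nat.mod_self, pow_zero] at this
    exact this.symm

private lemma perm_pow_eq_pow_mod_aux {σ : Equiv.Perm (Fin n)} {a : Fin n} {c : ℕ}
    (hc : (σ ^ c) a = a) (m : ℕ) : (σ ^ m) a = (σ ^ (m % c)) a := by
  have key : ∀ t : ℕ, ((σ ^ c) ^ t) a = a := by
    intro t
    induction t with
    | zero => rfl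
    | succ t ih => rw [pow_succ, Equiv.Perm.mul_apply, hc, ih]
  conv_lhs => rw [← Nat.mod_add_div m c, pow_add, Equiv.Perm.mul_apply, pow_mul, key]

private lemma cycleLen_le {σ : Equiv.Perm (Fin n)} {a : Fin n} {c : ℕ} (hc0 : 0 < c)
    (hca : (σ ^ c) a = a) : cycleLen σ a ≤ c := by
  have hsub : (univ.filter fun m => σ.SameCycle a m) ⊆
      (Finset.range c).image (fun j => (σ ^ j) a) := by
    intro m hm
    simp only [mem_filter, mem_univ, true_and] at hm
    obtain ⟨j, _, hj⟩ := hm.exists_pow_eq'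
    rw [perm_pow_eq_pow_mod_aux hca] at hj
    exact Finset.mem_image.mpr ⟨j % c, Finset.mem_range.mpr (Nat.mod_lt _ hc0), hj⟩
  calc cycleLen σ a ≤ _ := Finset.card_le_card hsub
    _ ≤ c := le_trans Finset.card_image_le (by simp)

private lemma sameCycle_nat {σ : Equiv.Perm (Fin n)} {a b : Fin n} (m : ℕ)
    (h : (σ ^ m) a = b) : σ.SameCycle a b := ⟨(m : ℤ), by rw [zpow_natCast]; exact h⟩

private lemma gamma_mod {p q : ℕ} (hp : 0 < p) (hq : 0 < q) (hkp : k ∣ p) (hkq : k ∣ q)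
    (i : Fin (p + q)) : (((gammaPQ p q) i).val) % k = (i.val + 1) % k := by
  unfold gammaPQ
  obtain ⟨p, rfl⟩ : ∃ p', p = p' + 1 := ⟨p - 1, by omega⟩
  obtain ⟨q, rfl⟩ : ∃ q', q = q' + 1 := ⟨q - 1, by omega⟩
  rw [Equiv.permCongr_apply]
  rcases h : finSumFinEquiv.symm i with a | a
  · have hi : i = finSumFinEquiv (Sum.inl a) := by rw [← h, Equiv.apply_symm_apply]
    have hival : i.val = a.val := by rw [hi, finSumFinEquiv_apply_left]; rfl
    simp only [Equiv.sumCongr_apply, Sum.map_inl, finSumFinEquiv_apply_left]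
    rw [Fin.coe_castAdd, coe_finRotate]
    by_cases ha : a = Fin.last p
    · have : a.val = p := by rw [ha]; rfl
      rw [if_pos ha, hival, this]
      have hzero : (p + 1) % k = 0 := Nat.mod_eq_zero_of_dvd hkp
      rw [Nat.zero_mod, hzero]
    · rw [if_neg ha, hival]
  · have hi : i = finSumFinEquiv (Sum.inr a) := by rw [← h, Equiv.apply_symm_apply]
    have hival : i.val = (p + 1) + a.val := by rw [hi, finSumFinEquiv_apply_right]; rfl
    simp only [Equiv.sumCongr_apply, Sum.map_inr, finSumFinEquiv_apply_right]
    rw [Fin.coe_natAdd, coe_finRotate]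
    by_cases ha : a = Fin.last q
    · have hav : a.val = q := by rw [ha]; rfl
      rw [if_pos ha, hival, hav]
      have h1 : ((p + 1) + q + 1) % k = (p + 1) % k := by
        have he : (p+1) + q + 1 = (p+1) + (q+1) := by ring
        rw [he, Nat.add_mod, Nat.mod_eq_zero_of_dvd hkq, Nat.add_zero,
          Nat.mod_mod_of_dvd _ dvd_rfl]
      rw [Nat.add_zero, h1]
    · rw [if_neg ha, hival]; try congr 1
      try omega

end AuxLemmas

theorem stmt13 {k p q : ℕ} (hk : 0 < k) (hp : 0 < p) (hq : 0 < q)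
    (σ : Equiv.Perm (Fin (k*p + k*q))) (hσ : IsSNC (k*p) (k*q) σ) :
    (KAlternating k σ ∧ KEqual k σ) ↔
      (KPreserving k (σ⁻¹ * gammaPQ (k*p) (k*q)) ∧
        Separates ((σ⁻¹ * gammaPQ (k*p) (k*q))⁻¹ * gammaPQ (k*p) (k*q))
          (multSet (k*p + k*q) k)) := by
  classical
  set γ := gammaPQ (k*p) (k*q) with hγdef
  have hkp : 0 < k*p := Nat.mul_pos hk hp
  have hkq : 0 < k*q := Nat.mul_pos hk hq
  have hγ : ∀ i : Fin (k*p + k*q), ((γ i).val) % k = (i.val + 1) % k :=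
    fun i => gamma_mod hkp hkq ⟨p, rfl⟩ ⟨q, rfl⟩ i
  have hSC : ∀ a b : Fin (k*p + k*q),
      ((σ⁻¹ * γ)⁻¹ * γ).SameCycle a b ↔ σ.SameCycle (γ a) (γ b) := by
    intro a b
    have hconj : (σ⁻¹ * γ)⁻¹ * γ = γ⁻¹ * σ * γ⁻¹⁻¹ := by
      rw [mul_inv_rev, inv_inv, inv_inv]
    rw [hconj, Equiv.Perm.sameCycle_conj, inv_inv]
  constructor
  · rintro ⟨hA, hE⟩
    constructor
    · intro i
      have hj := hA ((σ⁻¹ * γ) i)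
      simp only [Equiv.Perm.mul_apply, Equiv.Perm.apply_inv_self] at hj ⊢
      have h2 := hγ i
      have hcan : (σ⁻¹ (γ i)).val + 1 ≡ i.val + 1 [MOD k] := hj.symm.trans h2
      exact Nat.ModEq.add_right_cancel' 1 hcan
    · intro a ha b hb hab
      rw [hSC] at hab
      obtain ⟨m, _, hm⟩ := hab.exists_pow_eq'
      have hcyc : (σ ^ k) (γ a) = γ a := by
        have := pow_cycleLen σ (γ a)
        rwa [hE (γ a)] at this
      rw [perm_pow_eq_pow_mod_aux hcyc] at hm
      have hma := alt_pow hA (m % k) (γ a)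
      rw [hm] at hma
      have ha0 : (γ a).val % k = 0 := by
        rw [hγ a]
        simpa [multSet] using ha
      have hb0 : (γ b).val % k = 0 := by
        rw [hγ b]
        simpa [multSet] using hb
      have hmlt : m % k < k := Nat.mod_lt _ hk
      rw [Nat.add_mod, ha0, Nat.zero_add, Nat.mod_mod_of_dvd _ dvd_rfl,
        Nat.mod_eq_of_lt hmlt, hb0] at hma
      rw [← hma, pow_zero] at hm
      exact γ.injective hm
  · rintro ⟨hP, hS⟩
    have hA : KAlternating k σ := by
      intro i'
      have h1 := hP (γ⁻¹ (σ i'))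
      simp only [Equiv.Perm.mul_apply, Equiv.Perm.apply_inv_self,
        Equiv.Perm.inv_apply_self] at h1
      have h2 := hγ (γ⁻¹ (σ i'))
      rw [Equiv.Perm.apply_inv_self] at h2
      rw [h2, ← Nat.mod_add_mod, ← h1, Nat.mod_add_mod]
    have hE : KEqual k σ := by
      intro i
      by_contra hne
      set c := cycleLen σ i with hc
      have hcpos := cycleLen_pos σ i
      have hpowc : (σ ^ c) i = i := pow_cycleLen σ i
      have hdvd : k ∣ c := by
        have h4 : (i.val : ℕ) ≡ i.val + c [MOD k] := by
          have := alt_pow hA c i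
          rw [hpowc] at this
          exact this
        have h5 : i.val + 0 ≡ i.val + c [MOD k] := by simpa using h4
        have h6 : (0 : ℕ) ≡ c [MOD k] := Nat.ModEq.add_left_cancel' _ h5
        exact Nat.modEq_zero_iff_dvd.mp h6.symm
      have h2k : 2 * k ≤ c := by
        obtain ⟨t, ht⟩ := hdvd
        have ht0 : t ≠ 0 := by rintro rfl; simp at ht; omega
        have ht1 : t ≠ 1 := by rintro rfl; simp at ht; exact hne ht
        have ht2 : 2 ≤ t := by omega
        calc 2 * k = k * 2 := by ring
          _ ≤ k * t := Nat.mul_le_mul_left k ht2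
          _ = c := ht.symm
      obtain ⟨t0, ht0lt, ht0⟩ : ∃ t0, t0 < k ∧ (i.val + t0) % k = 0 := by
        by_cases h0 : i.val % k = 0
        · exact ⟨0, hk, by rw [Nat.add_zero]; exact h0⟩
        · refine ⟨k - i.val % k, by omega, ?_⟩
          rw [Nat.add_mod, Nat.mod_eq_of_lt (show k - i.val % k < k by
            have := Nat.mod_lt i.val hk; omega)]
          have he : i.val % k + (k - i.val % k) = k := by
            have := Nat.mod_lt i.val hk; omega
          rw [he, Nat.mod_self]
      set a := (σ ^ t0) i with hadef
      have hia : σ.SameCycle i a := sameCycle_nat t0 rfl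
      have hca : cycleLen σ a = c := (cycleLen_sameCycle hia).symm
      have ha0 : a.val % k = 0 := by
        have := alt_pow hA t0 i
        rw [← hadef] at this
        exact this.trans ht0
      set b := (σ ^ k) a with hbdef
      have hb0 : b.val % k = 0 := by
        have := alt_pow hA k a
        rw [← hbdef] at this
        rw [this, Nat.add_mod, ha0, Nat.mod_self, Nat.zero_add, Nat.zero_mod]
      have haK : γ⁻¹ a ∈ multSet (k*p + k*q) k := by
        simp only [multSet, Finset.mem_filter, Finset.mem_univ, true_and]
        have h2 := hγ (γ⁻¹ a)
        rw [Equiv.Perm.apply_inv_self] at h2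
        rw [← h2]; exact ha0
      have hbK : γ⁻¹ b ∈ multSet (k*p + k*q) k := by
        simp only [multSet, Finset.mem_filter, Finset.mem_univ, true_and]
        have h2 := hγ (γ⁻¹ b)
        rw [Equiv.Perm.apply_inv_self] at h2
        rw [← h2]; exact hb0
      have hsc : ((σ⁻¹ * γ)⁻¹ * γ).SameCycle (γ⁻¹ a) (γ⁻¹ b) := by
        rw [hSC, Equiv.Perm.apply_inv_self, Equiv.Perm.apply_inv_self]
        exact sameCycle_nat k hbdef.symm
      have heq := hS _ haK _ hbK hsc
      have hab : a = b := by
        have := congrArg γ heq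
        simpa using this
      have hpk : (σ ^ k) a = a := by rw [← hbdef, ← hab]
      have hle : cycleLen σ a ≤ k := cycleLen_le hk hpk
      omega
    exact ⟨hA, hE⟩
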